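/- Symmetrizability and the Kawashima condition for the linearized compressible Navier–Stokes system at the reference state: Let γ > 1, s_L = √γ, and let μ, λ, κ > 0 be real numbers. Define 5×5 real matrices: G with G₁₂ = 1, G₂₅ = γ−1, G₅₂ = γ/(γ−1), and all other entries 0; A₀ equal to the identity matrix except that (A₀)₁₅ = (A₀)₅₁ = 1/(γ−1) and (A₀)₅₅ = γ/(γ−1)²; and B with B₂₂ = 2μ+λ, B₃₃ = B₄₄ = μ, B₅₁ = −κ, B₅₅ = (γ−1)κ, and all other entries 0. Then: (a) A₀ is symmetric positive definite; (b) G A₀ is symmetric; (c) B A₀ equals the diagonal matrix diag(0, 2μ+λ, μ, μ, κ); in particular B A₀ is symmetric positive semidefinite and its kernel is spanned by e₁; (d) ((G − s_L I) A₀) e₁ = (−s_L, 1, 0, 0, −s_L/(γ−1))ᵀ, so e₁ is not an eigenvector of (G − s_L I) A₀; consequently no nonzero eigenvector of (G − s_L I) A₀ (over ℂ) lies in the kernel of B A₀, i.e., the Kawashima condition holds. -/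

import Mathlib

noncomputable section

open Matrix

/-- The Jacobian `G = ∇F(U_L)` of the Euler flux at the reference state. -/
def eulerG (gam : ℝ) : Matrix (Fin 5) (Fin 5) ℝ :=
  !![0, 1, 0, 0, 0;
     0, 0, 0, 0, gam - 1;
     0, 0, 0, 0, 0;
     0, 0, 0, 0, 0;
     0, gam / (gam - 1), 0, 0, 0]

/-- The symmetrizer `A₀` of the linearized compressible Navier–Stokes system. -/
def nsA0 (gam : ℝ) : Matrix (Fin 5) (Fin 5) ℝ :=
  !![1, 0, 0, 0, 1 / (gam - 1);
     0, 1, 0, 0, 0;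
     0, 0, 1, 0, 0;
     0, 0, 0, 1, 0;
     1 / (gam - 1), 0, 0, 0, gam / (gam - 1) ^ 2]

/-- The dissipation matrix `B` of the linearized compressible Navier–Stokes system. -/
def nsB (gam muv lamv kapv : ℝ) : Matrix (Fin 5) (Fin 5) ℝ :=
  !![0, 0, 0, 0, 0;
     0, 2 * muv + lamv, 0, 0, 0;
     0, 0, muv, 0, 0;
     0, 0, 0, muv, 0;
     -kapv, 0, 0, 0, (gam - 1) * kapv]

set_option maxHeartbeats 2000000 in
/-- **Symmetrizability and the Kawashima condition for the linearized compressible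
Navier–Stokes system at the reference state.** -/
theorem navier_stokes_symmetrizable_kawashima
    (gam muv lamv kapv : ℝ) (hgam : 1 < gam)
    (hmu : 0 < muv) (hlam : 0 < lamv) (hkap : 0 < kapv) :
    -- (a) A₀ is symmetric positive definite
    ((nsA0 gam).IsSymm ∧ (nsA0 gam).PosDef) ∧
    -- (b) G A₀ is symmetric
    (eulerG gam * nsA0 gam).IsSymm ∧
    -- (c) B A₀ is the stated diagonal matrix; it is symmetric positive semidefinite
    --     and its kernel is spanned by e₁
    (nsB gam muv lamv kapv * nsA0 gam
        = Matrix.diagonal ![0, 2 * muv + lamv, muv, muv, kapv] ∧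
      (nsB gam muv lamv kapv * nsA0 gam).PosSemidef ∧
      (∀ x : Fin 5 → ℝ, (nsB gam muv lamv kapv * nsA0 gam) *ᵥ x = 0 ↔
        ∃ t : ℝ, x = t • (Pi.single 0 1 : Fin 5 → ℝ))) ∧
    -- (d) e₁ is not an eigenvector of (G − s_L I)A₀, and the Kawashima condition holds
    (((eulerG gam - Real.sqrt gam • 1) * nsA0 gam) *ᵥ Pi.single 0 1
        = ![-Real.sqrt gam, 1, 0, 0, -Real.sqrt gam / (gam - 1)] ∧
      (∀ μc : ℝ, ((eulerG gam - Real.sqrt gam • 1) * nsA0 gam) *ᵥ Pi.single 0 1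
        ≠ μc • (Pi.single 0 1 : Fin 5 → ℝ)) ∧
      (∀ (x : Fin 5 → ℂ) (μc : ℂ),
        ((eulerG gam - Real.sqrt gam • 1) * nsA0 gam).map Complex.ofReal *ᵥ x = μc • x →
        (nsB gam muv lamv kapv * nsA0 gam).map Complex.ofReal *ᵥ x = 0 →
        x = 0)) := by
  have hg : gam - 1 ≠ 0 := by linarith
  have hg' : (0:ℝ) < gam - 1 := by linarith
  -- (c) the diagonal identity
  have hc : nsB gam muv lamv kapv * nsA0 gam
      = Matrix.diagonal ![0, 2 * muv + lamv, muv, muv, kapv] := by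
    ext i j
    fin_cases i <;> fin_cases j <;>
      simp [nsB, nsA0, Matrix.mul_apply, Fin.sum_univ_five, Matrix.diagonal,
        Matrix.vecHead, Matrix.vecTail] <;>
      first
        | rfl
        | (field_simp; try ring)
  -- (d) the vector identity
  have hd : ((eulerG gam - Real.sqrt gam • 1) * nsA0 gam) *ᵥ Pi.single 0 1
      = ![-Real.sqrt gam, 1, 0, 0, -Real.sqrt gam / (gam - 1)] := by
    funext i
    fin_cases i <;>
      simp [eulerG, nsA0, Matrix.sub_mul, Matrix.mulVec, dotProduct,
        Fin.sum_univ_five, Matrix.mul_apply, Matrix.one_apply, Pi.single_apply,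
        Matrix.smul_apply, Matrix.vecHead, Matrix.vecTail] <;>
      first
        | rfl
        | (field_simp; try ring)
  refine ⟨⟨?_, ?_⟩, ?_, ⟨hc, ?_, ?_⟩, hd, ?_, ?_⟩
  · -- A₀ symmetric
    ext i j
    fin_cases i <;> fin_cases j <;>
      simp [nsA0, Matrix.IsSymm, Matrix.transpose_apply, Matrix.vecHead, Matrix.vecTail]
  · -- A₀ positive definite
    refine Matrix.PosDef.of_dotProduct_mulVec_pos ?_ (fun x hx => ?_)
    · ext i j
      fin_cases i <;> fin_cases j <;>
        simp [nsA0, Matrix.transpose_apply, Matrix.vecHead, Matrix.vecTail, Matrix.IsHermitian]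
    · have hq : (star x) ⬝ᵥ (nsA0 gam *ᵥ x)
          = (x 0 + x 4 / (gam - 1)) ^ 2 + x 1 ^ 2 + x 2 ^ 2 + x 3 ^ 2
            + (gam - 1) * (x 4 / (gam - 1)) ^ 2 := by
        simp [nsA0, Matrix.mulVec, dotProduct, Fin.sum_univ_five,
          Matrix.vecHead, Matrix.vecTail, Function.comp]
        field_simp
        ring
      rw [hq]
      by_contra hle
      push_neg at hle
      have h0 : 0 ≤ (x 0 + x 4 / (gam - 1)) ^ 2 := sq_nonneg _
      have h1 : 0 ≤ x 1 ^ 2 := sq_nonneg _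
      have h2 : 0 ≤ x 2 ^ 2 := sq_nonneg _
      have h3 : 0 ≤ x 3 ^ 2 := sq_nonneg _
      have h4 : 0 ≤ (gam - 1) * (x 4 / (gam - 1)) ^ 2 :=
        mul_nonneg (le_of_lt hg') (sq_nonneg _)
      have e1 : x 1 = 0 := by
        have : x 1 ^ 2 = 0 := le_antisymm (by linarith) h1
        exact pow_eq_zero_iff (by norm_num) |>.mp this
      have e2 : x 2 = 0 := by
        have : x 2 ^ 2 = 0 := le_antisymm (by linarith) h2
        exact pow_eq_zero_iff (by norm_num) |>.mp this
      have e3 : x 3 = 0 := by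
        have : x 3 ^ 2 = 0 := le_antisymm (by linarith) h3
        exact pow_eq_zero_iff (by norm_num) |>.mp this
      have e4 : x 4 = 0 := by
        have h40 : (gam - 1) * (x 4 / (gam - 1)) ^ 2 = 0 :=
          le_antisymm (by linarith) h4
        have : (x 4 / (gam - 1)) ^ 2 = 0 := by
          rcases mul_eq_zero.mp h40 with h | h
          · exact absurd h hg
          · exact h
        have := pow_eq_zero_iff (n := 2) (by norm_num) |>.mp this
        field_simp at this
        simpa using this
      have e0 : x 0 = 0 := by
        have h00 : (x 0 + x 4 / (gam - 1)) ^ 2 = 0 :=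
          le_antisymm (by linarith) h0
        have := pow_eq_zero_iff (n := 2) (by norm_num) |>.mp h00
        rw [e4] at this
        simpa using this
      apply hx
      funext i
      fin_cases i <;> simp [e0, e1, e2, e3, e4]
  · -- G A₀ symmetric
    ext i j
    fin_cases i <;> fin_cases j <;>
      simp [eulerG, nsA0, Matrix.mul_apply, Fin.sum_univ_five,
        Matrix.vecHead, Matrix.vecTail] <;>
      first
        | rfl
        | (field_simp; try ring)
  · -- B A₀ PosSemidef
    rw [hc, Matrix.posSemidef_diagonal_iff]
    intro i
    fin_cases i <;> simp <;> positivity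
  · -- kernel of B A₀
    intro x
    rw [hc]
    constructor
    · intro h
      refine ⟨x 0, ?_⟩
      funext i
      have h1 := congrFun h 1
      have h2 := congrFun h 2
      have h3 := congrFun h 3
      have h4 := congrFun h 4
      simp [Matrix.mulVec_diagonal] at h1 h2 h3 h4
      have hml : (2 * muv + lamv) ≠ 0 := by positivity
      have hx1 : x 1 = 0 := by
        rcases h1 with h | h
        · exact absurd h hml
        · exact h
      have hx2 : x 2 = 0 := by
        rcases h2 with h | h
        · exact absurd h hmu.ne'
        · exact h
      have hx3 : x 3 = 0 := by
        rcases h3 with h | h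
        · exact absurd h hmu.ne'
        · exact h
      have hx4 : x 4 = 0 := by
        rcases h4 with h | h
        · exact absurd h hkap.ne'
        · exact h
      fin_cases i <;> simp [Pi.single_apply, hx1, hx2, hx3, hx4]
    · rintro ⟨t, rfl⟩
      funext i
      fin_cases i <;> simp [Matrix.mulVec_diagonal, Pi.single_apply]
  · -- e₁ not an eigenvector
    intro μc h
    rw [hd] at h
    have := congrFun h 1
    simp [Pi.single_apply] at this
  · -- Kawashima condition
    intro x μc heig hker
    rw [hc] at hker
    -- From the kernel condition, components 1..4 vanish.
    have h1 := congrFun hker 1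
    have h2 := congrFun hker 2
    have h3 := congrFun hker 3
    have h4 := congrFun hker 4
    simp [Matrix.mulVec, dotProduct, Fin.sum_univ_five, Matrix.diagonal,
      Matrix.map_apply, Matrix.vecHead, Matrix.vecTail, Function.comp] at h1 h2 h3 h4
    have hml : 2 * (muv:ℂ) + (lamv:ℂ) ≠ 0 := by
      have : (2 * muv + lamv : ℝ) ≠ 0 := by positivity
      exact_mod_cast this
    have hmuC : ((muv : ℝ) : ℂ) ≠ 0 := by
      simp only [ne_eq, Complex.ofReal_eq_zero]
      exact hmu.ne'
    have hkapC : ((kapv : ℝ) : ℂ) ≠ 0 := by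
      simp only [ne_eq, Complex.ofReal_eq_zero]
      exact hkap.ne'
    have hx1 : x 1 = 0 := by
      rcases h1 with h | h
      · exact absurd h hml
      · exact h
    have hx2 : x 2 = 0 := by
      rcases h2 with h | h
      · exact absurd h hmu.ne'
      · exact h
    have hx3 : x 3 = 0 := by
      rcases h3 with h | h
      · exact absurd h hmu.ne'
      · exact h
    have hx4 : x 4 = 0 := by
      rcases h4 with h | h
      · exact absurd h hkap.ne'
      · exact h
    -- Now look at row 1 of the eigenvalue equation.
    have he1 := congrFun heig 1
    simp [eulerG, nsA0, Matrix.sub_mul, Matrix.mulVec, dotProduct,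
      Fin.sum_univ_five, Matrix.mul_apply, Matrix.one_apply, Matrix.map_apply,
      Matrix.smul_apply, Matrix.vecHead, Matrix.vecTail, Function.comp,
      hx1, hx2, hx3, hx4] at he1
    -- he1 should say something like (coef) * x 0 = 0 with coef involving the entry 1
    have hx0 : x 0 = 0 := by
      have hgC : (gam : ℂ) - 1 ≠ 0 := by
        intro h
        apply hg
        exact_mod_cast h
      rcases he1 with h | h
      · exact absurd h hgC
      · exact h
    funext i
    fin_cases i <;> simp [hx0, hx1, hx2, hx3, hx4]
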